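/- Let G be a connected graph, c a proper t-vertex coloring of G with colors in Z_t (t ≥ 1), v a vertex of G, and T a spanning tree of G. Then there exists an edge coloring s : E(G) → Z_t with s(e) = 0 for all e ∈ E(G) \ E(T) such that for every vertex u ≠ v, Σ_{e ∈ E_u} s(e) = c(u) in Z_t. -/

import Mathlib

open Finset

-- The vertex label induced by an edge coloring: `twinLabel G s v = Σ_{e ∈ E_v} s e` in `ZMod k`.
open scoped Classical in
noncomputable def twinLabel {V : Type*} [Fintype V] (G : SimpleGraph V) {k : ℕ}
    (s : Sym2 V → ZMod k) (v : V) : ZMod k :=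
  ∑ e ∈ G.incidenceFinset v, s e

/-- `s` is an improper twin `k`-edge coloring of `G`: the induced vertex labeling
is a proper vertex coloring. -/
def IsImproperTwin {V : Type*} [Fintype V] (G : SimpleGraph V) (k : ℕ)
    (s : Sym2 V → ZMod k) : Prop :=
  ∀ ⦃u v : V⦄, G.Adj u v → twinLabel G s u ≠ twinLabel G s v

/-- The improper twin chromatic index: the least `k ≥ 2` admitting an improper twin
`k`-edge coloring. -/
noncomputable def improperTwinIndex {V : Type*} [Fintype V] (G : SimpleGraph V) : ℕ :=
  sInf {k | 2 ≤ k ∧ ∃ s : Sym2 V → ZMod k, IsImproperTwin G k s}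

section StmtAux

open scoped Classical

variable {V : Type*} [Fintype V]

set_option linter.unusedSectionVars false

/-- Every vertex on a walk to `v` is within the walk's length of `v`. -/
lemma stmt1_dist_le_of_mem_support {T : SimpleGraph V} {w v x : V} (p : T.Walk w v)
    (hx : x ∈ p.support) : T.dist x v ≤ p.length :=
  le_trans (SimpleGraph.dist_le _) (SimpleGraph.Walk.length_dropUntil_le p hx)

/-- Adjacent vertices of a tree have different distances to any vertex. -/
lemma stmt1_tree_adj_dist_ne {T : SimpleGraph V} (hT : T.IsTree) {u w v : V}
    (h : T.Adj u w) : T.dist u v ≠ T.dist w v := by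
  intro heq
  obtain ⟨p, hp, hl⟩ := hT.isConnected.exists_path_of_dist w v
  have hune : u ≠ w := h.ne
  have husup : u ∉ p.support := by
    intro hu
    have h1 : (p.takeUntil u hu).length ≠ 0 := by
      intro h0
      exact hune (SimpleGraph.Walk.eq_of_length_eq_zero h0).symm
    have h2 : (p.takeUntil u hu).length + (p.dropUntil u hu).length = p.length := by
      have := congrArg SimpleGraph.Walk.length (p.take_spec hu)
      rwa [SimpleGraph.Walk.length_append] at this
    have h3 : T.dist u v ≤ (p.dropUntil u hu).length := SimpleGraph.dist_le _
    omega
  have hq : (SimpleGraph.Walk.cons h p).IsPath := hp.cons husup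
  obtain ⟨p', hp', hl'⟩ := hT.isConnected.exists_path_of_dist u v
  have hEq := (hT.existsUnique_path u v).unique hq hp'
  have := congrArg SimpleGraph.Walk.length hEq
  rw [SimpleGraph.Walk.length_cons] at this
  omega

/-- In a tree, every vertex `u ≠ v` has a neighbor strictly closer to `v`. -/
lemma stmt1_exists_parent {T : SimpleGraph V} (hT : T.IsTree) {u v : V} (hne : u ≠ v) :
    ∃ w, T.Adj u w ∧ T.dist w v + 1 = T.dist u v := by
  obtain ⟨p, hp, hl⟩ := hT.isConnected.exists_path_of_dist u v
  obtain ⟨w, hadj, q, rfl⟩ := SimpleGraph.Walk.exists_eq_cons_of_ne hne p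
  refine ⟨w, hadj, ?_⟩
  have h1 : T.dist w v ≤ q.length := SimpleGraph.dist_le q
  have h2 : T.dist u v ≤ T.dist u w + T.dist w v := hT.isConnected.dist_triangle
  have h3 : T.dist u w = 1 := SimpleGraph.dist_eq_one_iff_adj.mpr hadj
  rw [SimpleGraph.Walk.length_cons] at hl
  omega

/-- In a tree, the closer neighbor is unique. -/
lemma stmt1_parent_unique {T : SimpleGraph V} (hT : T.IsTree) {u v w₁ w₂ : V}
    (h1 : T.Adj u w₁) (h2 : T.Adj u w₂)
    (hd1 : T.dist w₁ v + 1 = T.dist u v) (hd2 : T.dist w₂ v + 1 = T.dist u v) :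
    w₁ = w₂ := by
  obtain ⟨p₁, hp₁, hl₁⟩ := hT.isConnected.exists_path_of_dist w₁ v
  obtain ⟨p₂, hp₂, hl₂⟩ := hT.isConnected.exists_path_of_dist w₂ v
  have hu₁ : u ∉ p₁.support := by
    intro hu; have := stmt1_dist_le_of_mem_support p₁ hu; omega
  have hu₂ : u ∉ p₂.support := by
    intro hu; have := stmt1_dist_le_of_mem_support p₂ hu; omega
  have hq₁ : (SimpleGraph.Walk.cons h1 p₁).IsPath := hp₁.cons hu₁
  have hq₂ : (SimpleGraph.Walk.cons h2 p₂).IsPath := hp₂.cons hu₂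
  have hEq := (hT.existsUnique_path u v).unique hq₁ hq₂
  have hs := congrArg SimpleGraph.Walk.support hEq
  rw [SimpleGraph.Walk.support_cons, SimpleGraph.Walk.support_cons,
    SimpleGraph.Walk.support_eq_cons p₁, SimpleGraph.Walk.support_eq_cons p₂] at hs
  exact (List.cons.injEq _ _ _ _ ▸ hs).2 |> fun h => (List.cons.injEq _ _ _ _ ▸ h).1

/-- In a tree, every neighbor of `u` is either a parent or a child w.r.t. root `v`. -/
lemma stmt1_adj_dist_cases {T : SimpleGraph V} (hT : T.IsTree) {u w v : V}
    (h : T.Adj u w) :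
    T.dist w v = T.dist u v + 1 ∨ T.dist w v + 1 = T.dist u v := by
  have hne := stmt1_tree_adj_dist_ne hT h (v := v)
  have h1 : T.dist u v ≤ T.dist u w + T.dist w v := hT.isConnected.dist_triangle
  have h2 : T.dist w v ≤ T.dist w u + T.dist u v := hT.isConnected.dist_triangle
  have h3 : T.dist u w = 1 := SimpleGraph.dist_eq_one_iff_adj.mpr h
  have h4 : T.dist w u = 1 := SimpleGraph.dist_eq_one_iff_adj.mpr h.symm
  omega

lemma stmt1_dist_lt_card {T : SimpleGraph V} (hT : T.IsTree) (u v : V) :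
    T.dist u v < Fintype.card V := by
  obtain ⟨p, hp, hl⟩ := hT.isConnected.exists_path_of_dist u v
  exact hl ▸ hp.length_lt

/-- Fuel-indexed recursion defining the value carried by each vertex's parent edge. -/
noncomputable def stmt1_hAux (T : SimpleGraph V) (v : V) {t : ℕ} (c : V → ZMod t) :
    ℕ → V → ZMod t
  | 0 => c
  | (k+1) => fun u => c u -
      ∑ w ∈ Finset.univ.filter (fun w => T.Adj u w ∧ T.dist w v = T.dist u v + 1),
        stmt1_hAux T v c k w

noncomputable def stmt1_g (T : SimpleGraph V) (v : V) {t : ℕ} (c : V → ZMod t)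
    (u : V) : ZMod t :=
  stmt1_hAux T v c (Fintype.card V - T.dist u v) u

lemma stmt1_g_eq {T : SimpleGraph V} (hT : T.IsTree) (v : V) {t : ℕ} (c : V → ZMod t)
    (u : V) :
    stmt1_g T v c u = c u -
      ∑ w ∈ Finset.univ.filter (fun w => T.Adj u w ∧ T.dist w v = T.dist u v + 1),
        stmt1_g T v c w := by
  have hlt : T.dist u v < Fintype.card V := stmt1_dist_lt_card hT u v
  have hk : Fintype.card V - T.dist u v = (Fintype.card V - T.dist u v - 1) + 1 := by
    omega
  rw [stmt1_g, hk]
  show c u - _ = c u - _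
  congr 1
  apply Finset.sum_congr rfl
  intro w hw
  simp only [Finset.mem_filter] at hw
  have : Fintype.card V - T.dist w v = Fintype.card V - T.dist u v - 1 := by
    have := stmt1_dist_lt_card hT w v
    omega
  rw [stmt1_g, this]

/-- The edge coloring: each tree edge gets the `stmt1_g`-value of its endpoint
farther from `v`; non-tree edges get `0`. -/
noncomputable def stmt1_s (T : SimpleGraph V) (v : V) {t : ℕ} (c : V → ZMod t) :
    Sym2 V → ZMod t := fun e =>
  if e ∈ T.edgeSet then
    Sym2.lift ⟨fun a b =>
      if T.dist a v < T.dist b v then stmt1_g T v c b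
      else if T.dist b v < T.dist a v then stmt1_g T v c a else 0,
      by
        intro a b
        rcases lt_trichotomy (T.dist a v) (T.dist b v) with h | h | h <;>
          simp [h, h.not_gt, le_of_eq, lt_irrefl]⟩ e
  else 0

lemma stmt1_s_child {T : SimpleGraph V} (v : V) {t : ℕ} (c : V → ZMod t) {u w : V}
    (hadj : T.Adj u w) (hd : T.dist w v = T.dist u v + 1) :
    stmt1_s T v c s(u, w) = stmt1_g T v c w := by
  rw [stmt1_s, if_pos (T.mem_edgeSet.mpr hadj), Sym2.lift_mk]
  simp only []
  rw [if_pos (by omega)]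

lemma stmt1_s_parent {T : SimpleGraph V} (v : V) {t : ℕ} (c : V → ZMod t) {u w : V}
    (hadj : T.Adj u w) (hd : T.dist w v + 1 = T.dist u v) :
    stmt1_s T v c s(u, w) = stmt1_g T v c u := by
  rw [stmt1_s, if_pos (T.mem_edgeSet.mpr hadj), Sym2.lift_mk]
  simp only []
  rw [if_neg (by omega), if_pos (by omega)]

end StmtAux

theorem stmt_1 {V : Type*} [Fintype V] (G : SimpleGraph V) (hG : G.Connected)
    (t : ℕ) (ht : 1 ≤ t) (c : V → ZMod t)
    (hc : ∀ ⦃u w : V⦄, G.Adj u w → c u ≠ c w)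
    (v : V) (T : SimpleGraph V) (hTG : T ≤ G) (hT : T.IsTree) :
    ∃ s : Sym2 V → ZMod t,
      (∀ e ∈ G.edgeSet, e ∉ T.edgeSet → s e = 0) ∧
      ∀ u : V, u ≠ v → twinLabel G s u = c u := by
  classical
  refine ⟨stmt1_s T v c, fun e _ he => if_neg he, ?_⟩
  intro u hu
  rw [twinLabel]
  have key : ∑ e ∈ G.incidenceFinset u, stmt1_s T v c e
      = ∑ w ∈ Finset.univ.filter (fun w => T.Adj u w), stmt1_s T v c s(u, w) := by
    have himage : ∑ e ∈ (Finset.univ.filter (fun w => T.Adj u w)).image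
          (fun w => s(u, w)), stmt1_s T v c e
        = ∑ w ∈ Finset.univ.filter (fun w => T.Adj u w), stmt1_s T v c s(u, w) :=
      Finset.sum_image (fun x _ y _ h => Sym2.congr_right.mp h)
    rw [← himage]
    apply (Finset.sum_subset ?_ ?_).symm
    · intro e he
      obtain ⟨w, hw, rfl⟩ := Finset.mem_image.mp he
      rw [Finset.mem_filter] at hw
      rw [SimpleGraph.mem_incidenceFinset]
      exact ⟨G.mem_edgeSet.mpr (hTG hw.2), Sym2.mem_mk_left u w⟩
    · intro e he hne
      rw [SimpleGraph.mem_incidenceFinset, SimpleGraph.incidenceSet] at he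
      obtain ⟨heG, hue⟩ := he
      apply if_neg
      intro heT
      apply hne
      rw [Finset.mem_image]
      refine ⟨Sym2.Mem.other hue, ?_, Sym2.other_spec hue⟩
      rw [Finset.mem_filter]
      refine ⟨Finset.mem_univ _, ?_⟩
      have := Sym2.other_spec hue
      rw [← this] at heT
      exact T.mem_edgeSet.mp heT
  rw [key, ← Finset.sum_filter_add_sum_filter_not _
    (fun w => T.dist w v + 1 = T.dist u v)]
  obtain ⟨p, hpadj, hpd⟩ := stmt1_exists_parent hT hu
  have hpar : (Finset.univ.filter (fun w => T.Adj u w)).filter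
      (fun w => T.dist w v + 1 = T.dist u v) = {p} := by
    ext w
    simp only [Finset.mem_filter, Finset.mem_univ, true_and, Finset.mem_singleton]
    constructor
    · rintro ⟨hadj, hd⟩
      exact stmt1_parent_unique hT hadj hpadj hd hpd
    · rintro rfl
      exact ⟨hpadj, hpd⟩
  have hch : ∑ w ∈ (Finset.univ.filter (fun w => T.Adj u w)).filter
        (fun w => ¬(T.dist w v + 1 = T.dist u v)), stmt1_s T v c s(u, w)
      = ∑ w ∈ Finset.univ.filter
          (fun w => T.Adj u w ∧ T.dist w v = T.dist u v + 1),
        stmt1_g T v c w := by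
    rw [Finset.filter_filter]
    apply Finset.sum_congr
    · ext w
      simp only [Finset.mem_filter, Finset.mem_univ, true_and]
      constructor
      · rintro ⟨hadj, hd⟩
        exact ⟨hadj, (stmt1_adj_dist_cases hT hadj).resolve_right hd⟩
      · rintro ⟨hadj, hd⟩
        exact ⟨hadj, by omega⟩
    · intro w hw
      rw [Finset.mem_filter] at hw
      exact stmt1_s_child v c hw.2.1 hw.2.2
  rw [hpar, Finset.sum_singleton, stmt1_s_parent v c hpadj hpd, hch, stmt1_g_eq hT]
  ring
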